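/- arXiv:1707.03814 — 2 statements merged into one kernel-verified Lean document; each statement's English description precedes it below -/
import Mathlib

section
/- A subset S ⊆ 𝕊, equipped with the subspace topology induced by the localic topology, is a sober topological space (i.e., it is T0 and every nonempty irreducible closed subset has a generic point) if and only if S is closed in the pcfb-topology on 𝕊. -/
open Topology

/-- A supernatural number: a function from the set of primes to `ℕ∞ = ℕ ∪ {∞}`,
thought of as the formal product `∏ p ^ (s p)`. -/
def Supernatural : Type := Nat.Primes → ℕ∞

/-- Divisibility of supernatural numbers: `s ∣ t` iff `s p ≤ t p` for every prime `p`. -/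
instance : Dvd Supernatural := ⟨fun s t => ∀ p, s p ≤ t p⟩

/-- The supernatural number associated to a positive natural number,
given by its prime factorization. -/
def natToSuper (n : ℕ+) : Supernatural := fun p => ((n : ℕ).factorization p : ℕ∞)

/-- The localic topology on `𝕊`, generated by the open sets `(n) = {s : n ∣ s}`
for `n` a positive natural number. -/
def localicTopology : TopologicalSpace Supernatural :=
  .generateFrom {U | ∃ n : ℕ+, U = {s | natToSuper n ∣ s}}

attribute [instance] localicTopology

/-- The pcfb-topology on `𝕊`, generated by the sets `{x | n ∣ x ∧ x ∣ s}`
for `n` a positive natural number and `s` a supernatural number. -/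
def pcfbTopology : TopologicalSpace Supernatural :=
  .generateFrom {U | ∃ (n : ℕ+) (t : Supernatural), U = {x | natToSuper n ∣ x ∧ x ∣ t}}

-- basic dvd lemmas
lemma super_dvd_iff {s t : Supernatural} : s ∣ t ↔ ∀ p, s p ≤ t p := Iff.rfl

lemma super_dvd_trans {a b c : Supernatural} (h1 : a ∣ b) (h2 : b ∣ c) : a ∣ c :=
  fun p => le_trans (h1 p) (h2 p)

lemma super_dvd_refl (a : Supernatural) : a ∣ a := fun p => le_refl _

lemma super_dvd_antisymm {a b : Supernatural} (h1 : a ∣ b) (h2 : b ∣ a) : a = b :=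
  funext fun p => le_antisymm (h1 p) (h2 p)

lemma natToSuper_apply (n : ℕ+) (p : Nat.Primes) :
    natToSuper n p = ((n : ℕ).factorization p : ℕ∞) := rfl

lemma natToSuper_dvd_natToSuper {m n : ℕ+} (h : (m:ℕ) ∣ (n:ℕ)) :
    natToSuper m ∣ natToSuper n := by
  intro p
  rw [natToSuper_apply, natToSuper_apply]
  exact_mod_cast (Nat.factorization_le_iff_dvd m.ne_zero n.ne_zero).2 h (p : ℕ)

lemma natToSuper_one_dvd (x : Supernatural) : natToSuper 1 ∣ x := by
  intro p
  rw [natToSuper_apply]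
  simp

def primePow (p : Nat.Primes) (k : ℕ) : ℕ+ := ⟨(p:ℕ)^k, pow_pos p.2.pos k⟩

lemma factorization_primePow (p : Nat.Primes) (k : ℕ) (q : Nat.Primes) :
    ((primePow p k : ℕ+) : ℕ).factorization q = if q = p then k else 0 := by
  have : ((primePow p k : ℕ+) : ℕ) = (p:ℕ)^k := rfl
  rw [this, p.2.factorization_pow, Finsupp.single_apply]
  by_cases h : q = p
  · subst h; simp
  · have : (p:ℕ) ≠ (q:ℕ) := fun hh => h (Subtype.ext hh.symm)
    simp [this, h]

lemma natToSuper_primePow_dvd {p : Nat.Primes} {k : ℕ} {x : Supernatural} :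
    natToSuper (primePow p k) ∣ x ↔ (k : ℕ∞) ≤ x p := by
  constructor
  · intro h
    have := h p
    rwa [natToSuper_apply, factorization_primePow, if_pos rfl] at this
  · intro h q
    rw [natToSuper_apply, factorization_primePow]
    by_cases hq : q = p
    · subst hq; rwa [if_pos rfl]
    · rw [if_neg hq]; simp

lemma natToSuper_lcm_dvd {m n : ℕ+} {x : Supernatural} :
    natToSuper (m.lcm n) ∣ x ↔ natToSuper m ∣ x ∧ natToSuper n ∣ x := by
  have hfac : ∀ p : Nat.Primes, ((m.lcm n : ℕ+) : ℕ).factorization p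
      = max ((m:ℕ).factorization p) ((n:ℕ).factorization p) := by
    intro p
    have h1 : ((m.lcm n : ℕ+) : ℕ) = Nat.lcm (m:ℕ) (n:ℕ) := rfl
    rw [h1, Nat.factorization_lcm m.ne_zero n.ne_zero]
    exact Finsupp.sup_apply _ _ _
  have hcast : ∀ a b : ℕ, ((max a b : ℕ) : ℕ∞) = max (a:ℕ∞) (b:ℕ∞) :=
    fun a b => Monotone.map_max (fun u v huv => by exact_mod_cast huv)
  constructor
  · intro h
    constructor <;> intro p <;> have hp := h p <;>
      rw [natToSuper_apply, hfac, hcast] at hp <;> rw [natToSuper_apply]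
    · exact le_trans (le_max_left _ _) hp
    · exact le_trans (le_max_right _ _) hp
  · rintro ⟨h1, h2⟩ p
    rw [natToSuper_apply, hfac, hcast]
    exact max_le (h1 p) (h2 p)

-- (n) is open
lemma isOpen_dvdSet (n : ℕ+) : IsOpen {s : Supernatural | natToSuper n ∣ s} :=
  TopologicalSpace.GenerateOpen.basic _ ⟨n, rfl⟩

-- Lemma A: basis property of localic topology
lemma exists_basic_nhd {U : Set Supernatural} (hU : IsOpen U) {x : Supernatural}
    (hx : x ∈ U) : ∃ n : ℕ+, natToSuper n ∣ x ∧ {s | natToSuper n ∣ s} ⊆ U := by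
  induction hU with
  | basic V hV =>
    obtain ⟨n, rfl⟩ := hV
    exact ⟨n, hx, fun s hs => hs⟩
  | univ => exact ⟨1, natToSuper_one_dvd x, fun s _ => trivial⟩
  | inter V W _ _ ihV ihW =>
    obtain ⟨n, hn, hnV⟩ := ihV hx.1
    obtain ⟨m, hm, hmW⟩ := ihW hx.2
    refine ⟨n.lcm m, natToSuper_lcm_dvd.2 ⟨hn, hm⟩, fun s hs => ?_⟩
    obtain ⟨h1, h2⟩ := natToSuper_lcm_dvd.1 hs
    exact ⟨hnV h1, hmW h2⟩
  | sUnion s _ ih =>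
    obtain ⟨V, hVs, hxV⟩ := hx
    obtain ⟨n, hn, hsub⟩ := ih V hVs hxV
    exact ⟨n, hn, fun y hy => ⟨V, hVs, hsub hy⟩⟩

-- ENat helper
lemma enat_le_of_forall_nat {a b : ℕ∞} (h : ∀ k : ℕ, (k:ℕ∞) ≤ a → (k:ℕ∞) ≤ b) : a ≤ b := by
  cases a with
  | top =>
    rw [top_le_iff]
    by_contra hb
    lift b to ℕ using hb
    have := h (b+1) le_top
    have : b + 1 ≤ b := by exact_mod_cast this
    omega
  | coe a => exact h a le_rfl

-- closure of a singleton
lemma mem_closure_singleton {x t : Supernatural} :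
    x ∈ closure {t} ↔ x ∣ t := by
  constructor
  · intro h p
    refine enat_le_of_forall_nat (fun k hk => ?_)
    have hopen := isOpen_dvdSet (primePow p k)
    have hx : x ∈ {s : Supernatural | natToSuper (primePow p k) ∣ s} :=
      natToSuper_primePow_dvd.2 hk
    obtain ⟨y, hy1, hy2⟩ := mem_closure_iff.1 h _ hopen hx
    rw [Set.mem_singleton_iff] at hy2; subst hy2
    exact natToSuper_primePow_dvd.1 hy1
  · intro h
    rw [mem_closure_iff]
    intro U hU hxU
    obtain ⟨n, hn, hsub⟩ := exists_basic_nhd hU hxU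
    exact ⟨t, hsub (super_dvd_trans hn h), rfl⟩

instance : T0Space Supernatural := by
  rw [t0Space_iff_inseparable]
  intro a b hab
  have h1 : a ∈ closure {b} := specializes_iff_mem_closure.1 hab.symm.specializes
  have h2 : b ∈ closure {a} := specializes_iff_mem_closure.1 hab.specializes
  exact super_dvd_antisymm (mem_closure_singleton.1 h1) (mem_closure_singleton.1 h2)

lemma exists_ge_of_le_biSup {T : Set Supernatural} (hne : T.Nonempty) (p : Nat.Primes) {k : ℕ}
    (h : (k:ℕ∞) ≤ ⨆ y ∈ T, y p) : ∃ y ∈ T, (k:ℕ∞) ≤ y p := by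
  by_contra hc
  push_neg at hc
  cases k with
  | zero =>
    obtain ⟨y, hy⟩ := hne
    simpa using hc y hy
  | succ k' =>
    have hb : (⨆ y ∈ T, y p) ≤ (k' : ℕ∞) := by
      refine iSup₂_le fun y hy => ?_
      have := hc y hy
      rw [show ((k'+1 : ℕ) : ℕ∞) = (k' : ℕ∞) + 1 by push_cast; ring] at this
      exact (ENat.lt_add_one_iff (by exact ENat.coe_ne_top k')).1 this
    have : ((k'+1 : ℕ) : ℕ∞) ≤ (k' : ℕ∞) := le_trans h hb
    have : k' + 1 ≤ k' := by exact_mod_cast this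
    omega

lemma key_extract {T : Set Supernatural} (hpre : IsPreirreducible T) (hne : T.Nonempty)
    {t : Supernatural} (ht : ∀ (p : Nat.Primes) (k : ℕ), (k:ℕ∞) ≤ t p → ∃ y ∈ T, (k:ℕ∞) ≤ y p) :
    ∀ n : ℕ+, natToSuper n ∣ t → ∃ y ∈ T, natToSuper n ∣ y := by
  intro n
  induction n using PNat.strongInductionOn with
  | _ n ih =>
    intro hnt
    by_cases h1 : n = 1
    · subst h1
      obtain ⟨y, hy⟩ := hne
      exact ⟨y, hy, natToSuper_one_dvd y⟩
    · obtain ⟨p, hp, hpd⟩ := Nat.exists_prime_and_dvd (n := (n:ℕ)) (fun h => h1 (PNat.coe_eq_one_iff.mp h))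
      set pp : Nat.Primes := ⟨p, hp⟩
      set k : ℕ := (n:ℕ).factorization p with hk
      have hkpos : 0 < k := hp.factorization_pos_of_dvd n.ne_zero hpd
      -- prime power part
      have hppn : ((primePow pp k : ℕ+) : ℕ) ∣ (n:ℕ) := Nat.ordProj_dvd n p
      have hppt : natToSuper (primePow pp k) ∣ t :=
        super_dvd_trans (natToSuper_dvd_natToSuper hppn) hnt
      obtain ⟨y1, hy1T, hy1⟩ := ht pp k (natToSuper_primePow_dvd.1 hppt)
      have hy1' : natToSuper (primePow pp k) ∣ y1 := natToSuper_primePow_dvd.2 hy1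
      -- complement part
      set m : ℕ := (n:ℕ) / p ^ k with hm
      have hmpos : 0 < m := Nat.ordCompl_pos p n.ne_zero
      set mp : ℕ+ := ⟨m, hmpos⟩ with hmp
      have hmn : (mp : ℕ) ∣ (n:ℕ) := Nat.ordCompl_dvd n p
      have hmlt : mp < n := by
        rw [← PNat.coe_lt_coe]
        refine Nat.div_lt_self n.pos ?_
        calc 1 < p := hp.one_lt
        _ ≤ p ^ k := Nat.le_self_pow (by omega) p
      have hmt : natToSuper mp ∣ t := super_dvd_trans (natToSuper_dvd_natToSuper hmn) hnt
      obtain ⟨y2, hy2T, hy2⟩ := ih mp hmlt hmt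
      -- combine via preirreducibility
      obtain ⟨y, hyT, hyU, hyV⟩ := hpre _ _ (isOpen_dvdSet (primePow pp k)) (isOpen_dvdSet mp)
        ⟨y1, hy1T, hy1'⟩ ⟨y2, hy2T, hy2⟩
      refine ⟨y, hyT, fun q => ?_⟩
      rw [natToSuper_apply]
      by_cases hq : q = pp
      · subst hq
        exact natToSuper_primePow_dvd.1 hyU
      · have hqp : (q:ℕ) ≠ p := fun hh => hq (Subtype.ext hh)
        have hfq : (m).factorization q = (n:ℕ).factorization q := by
          rw [hm, hk, Nat.factorization_ordCompl]
          simp [Finsupp.erase_apply, hqp]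
        have := hyV q
        rw [natToSuper_apply] at this
        have hmq : ((mp : ℕ).factorization q : ℕ∞) = ((n:ℕ).factorization q : ℕ∞) := by
          rw [show ((mp:ℕ+):ℕ) = m from rfl, hfq]
        rwa [hmq] at this

noncomputable def superInf (u v : Supernatural) : Supernatural := fun p => min (u p) (v p)

lemma dvd_superInf {x u v : Supernatural} : x ∣ superInf u v ↔ x ∣ u ∧ x ∣ v := by
  constructor
  · intro h
    exact ⟨fun p => le_trans (h p) (min_le_left _ _), fun p => le_trans (h p) (min_le_right _ _)⟩
  · rintro ⟨h1, h2⟩ p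
    exact le_min (h1 p) (h2 p)

lemma exists_pcfb_basic {U : Set Supernatural} (hU : IsOpen[pcfbTopology] U) {x : Supernatural}
    (hx : x ∈ U) : ∃ (n : ℕ+) (u : Supernatural), (natToSuper n ∣ x ∧ x ∣ u) ∧
      {y | natToSuper n ∣ y ∧ y ∣ u} ⊆ U := by
  have hU' : TopologicalSpace.GenerateOpen
      {U | ∃ (n : ℕ+) (t : Supernatural), U = {x | natToSuper n ∣ x ∧ x ∣ t}} U := hU
  clear hU
  induction hU' with
  | basic V hV =>
    obtain ⟨n, u, rfl⟩ := hV
    exact ⟨n, u, hx, fun y hy => hy⟩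
  | univ =>
    exact ⟨1, x, ⟨natToSuper_one_dvd x, super_dvd_refl x⟩, fun y _ => trivial⟩
  | inter V W _ _ ihV ihW =>
    obtain ⟨n, u, ⟨hn, hu⟩, hsubV⟩ := ihV hx.1
    obtain ⟨m, v, ⟨hm, hv⟩, hsubW⟩ := ihW hx.2
    refine ⟨n.lcm m, superInf u v, ⟨natToSuper_lcm_dvd.2 ⟨hn, hm⟩, dvd_superInf.2 ⟨hu, hv⟩⟩,
      fun y ⟨hy1, hy2⟩ => ?_⟩
    obtain ⟨hy1a, hy1b⟩ := natToSuper_lcm_dvd.1 hy1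
    obtain ⟨hy2a, hy2b⟩ := dvd_superInf.1 hy2
    exact ⟨hsubV ⟨hy1a, hy2a⟩, hsubW ⟨hy1b, hy2b⟩⟩
  | sUnion s _ ih =>
    obtain ⟨V, hVs, hxV⟩ := hx
    obtain ⟨n, u, hn, hsub⟩ := ih V hVs hxV
    exact ⟨n, u, hn, fun y hy => ⟨V, hVs, hsub hy⟩⟩

lemma pcfb_isOpen {U : Set Supernatural}
    (h : ∀ x ∈ U, ∃ (n : ℕ+) (u : Supernatural), (natToSuper n ∣ x ∧ x ∣ u) ∧
      ∀ y, natToSuper n ∣ y → y ∣ u → y ∈ U) : IsOpen[pcfbTopology] U := by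
  have hrw : U = ⋃₀ {V | V ⊆ U ∧
      ∃ (n : ℕ+) (t : Supernatural), V = {x | natToSuper n ∣ x ∧ x ∣ t}} := by
    ext x
    constructor
    · intro hx
      obtain ⟨n, u, ⟨h1, h2⟩, h3⟩ := h x hx
      exact ⟨{y | natToSuper n ∣ y ∧ y ∣ u}, ⟨fun y hy => h3 y hy.1 hy.2, n, u, rfl⟩, h1, h2⟩
    · rintro ⟨V, ⟨hVU, _⟩, hxV⟩
      exact hVU hxV
  rw [hrw]
  exact TopologicalSpace.GenerateOpen.sUnion _ (fun V hV => .basic _ hV.2)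

lemma quasiSober_of_pcfbClosed {S : Set Supernatural} (hS : IsClosed[pcfbTopology] S) :
    QuasiSober S := by
  constructor
  intro T hirr hclosed
  set T' : Set Supernatural := Subtype.val '' T with hT'
  have hT'ne : T'.Nonempty := hirr.1.image _
  have hT'irr : IsIrreducible T' := hirr.image _ continuous_subtype_val.continuousOn
  set t : Supernatural := fun p => ⨆ y ∈ T', y p with htdef
  have ht : ∀ (p : Nat.Primes) (k : ℕ), (k:ℕ∞) ≤ t p → ∃ y ∈ T', (k:ℕ∞) ≤ y p :=
    fun p k hk => exists_ge_of_le_biSup hT'ne p hk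
  have hkey := key_extract hT'irr.2 hT'ne ht
  have hyt : ∀ y ∈ T', y ∣ t := by
    intro y hy p
    exact le_biSup (fun y : Supernatural => y p) hy
  have htS : t ∈ S := by
    by_contra htS
    have hopen : IsOpen[pcfbTopology] Sᶜ := hS.isOpen_compl
    obtain ⟨n, u, ⟨hn, hu⟩, hsub⟩ := exists_pcfb_basic hopen htS
    obtain ⟨y, hyT', hny⟩ := hkey n hn
    have hyc : y ∈ Sᶜ := hsub ⟨hny, super_dvd_trans (hyt y hyT') hu⟩
    obtain ⟨y0, _, rfl⟩ := hyT'
    exact hyc y0.2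
  refine ⟨⟨t, htS⟩, ?_⟩
  rw [IsGenericPoint]
  apply le_antisymm
  · -- closure {g} ⊆ T
    have hg : (⟨t, htS⟩ : S) ∈ closure T := by
      rw [closure_subtype, mem_closure_iff]
      intro U hU htU
      obtain ⟨n, hn, hsub⟩ := exists_basic_nhd hU htU
      obtain ⟨z, hzT', hnz⟩ := hkey n hn
      exact ⟨z, hsub hnz, hzT'⟩
    calc closure {(⟨t, htS⟩ : S)} ⊆ closure (closure T) :=
        closure_mono (Set.singleton_subset_iff.2 hg)
      _ = T := by rw [closure_closure, hclosed.closure_eq]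
  · -- T ⊆ closure {g}
    intro y hyT
    rw [closure_subtype, Set.image_singleton, mem_closure_singleton]
    exact hyt _ ⟨y, hyT, rfl⟩

lemma pcfbClosed_of_quasiSober {S : Set Supernatural} (h : QuasiSober S) :
    IsClosed[pcfbTopology] S := by
  rw [← @isOpen_compl_iff _ _ pcfbTopology]
  apply pcfb_isOpen
  intro x hx
  rw [Set.mem_compl_iff] at hx
  set D : Set S := {y | (y : Supernatural) ∣ x} with hD
  have hDclosed : IsClosed D := by
    have hrw : D = Subtype.val ⁻¹' (closure {x}) := by
      ext y
      simp only [hD, Set.mem_setOf_eq, Set.mem_preimage, mem_closure_singleton]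
    rw [hrw]
    exact isClosed_closure.preimage continuous_subtype_val
  by_cases hne : D.Nonempty
  · by_cases hpre : IsPreirreducible D
    · obtain ⟨g, hg⟩ := h.sober ⟨hne, hpre⟩ hDclosed
      have hgD : g ∈ D := by
        rw [IsGenericPoint] at hg
        rw [← hg]
        exact subset_closure rfl
      have hgx : (g : Supernatural) ∣ x := hgD
      have hgne : (g : Supernatural) ≠ x := fun he => hx (he ▸ g.2)
      have hex : ∃ p, (g : Supernatural) p < x p := by
        by_contra hc
        push_neg at hc
        exact hgne (super_dvd_antisymm hgx (fun p => hc p))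
      obtain ⟨p, hp⟩ := hex
      have hgtop : (g : Supernatural) p ≠ ⊤ := hp.ne_top
      set a : ℕ := ((g : Supernatural) p).toNat with hadef
      have ha : (a : ℕ∞) = (g : Supernatural) p := ENat.coe_toNat hgtop
      have hkx : ((a + 1 : ℕ) : ℕ∞) ≤ x p := by
        have : (a : ℕ∞) + 1 ≤ x p := (ENat.add_one_le_iff (ENat.coe_ne_top a)).2 (by rw [ha]; exact hp)
        exact_mod_cast this
      refine ⟨primePow p (a + 1), x, ⟨natToSuper_primePow_dvd.2 hkx, super_dvd_refl x⟩,
        fun y h1 h2 hyS => ?_⟩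
      have hyD : (⟨y, hyS⟩ : S) ∈ D := h2
      rw [IsGenericPoint] at hg
      rw [← hg, closure_subtype, Set.image_singleton, mem_closure_singleton] at hyD
      have h3 : ((a + 1 : ℕ) : ℕ∞) ≤ y p := natToSuper_primePow_dvd.1 h1
      have h4 : y p ≤ (a : ℕ∞) := by rw [ha]; exact hyD p
      have : ((a + 1 : ℕ) : ℕ∞) ≤ (a : ℕ∞) := le_trans h3 h4
      have : a + 1 ≤ a := by exact_mod_cast this
      omega
    · rw [IsPreirreducible] at hpre
      push_neg at hpre
      obtain ⟨U, V, hUo, hVo, ⟨y, hyD, hyU⟩, ⟨z, hzD, hzV⟩, hUV⟩ := hpre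
      obtain ⟨U', hU'o, rfl⟩ := isOpen_induced_iff.1 hUo
      obtain ⟨V', hV'o, rfl⟩ := isOpen_induced_iff.1 hVo
      obtain ⟨n, hn, hnsub⟩ := exists_basic_nhd hU'o hyU
      obtain ⟨m, hm, hmsub⟩ := exists_basic_nhd hV'o hzV
      refine ⟨n.lcm m, x,
        ⟨natToSuper_lcm_dvd.2 ⟨super_dvd_trans hn hyD, super_dvd_trans hm hzD⟩,
          super_dvd_refl x⟩, fun w h1 h2 hwS => ?_⟩
      obtain ⟨hw1, hw2⟩ := natToSuper_lcm_dvd.1 h1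
      have : (⟨w, hwS⟩ : S) ∈ D ∩ (Subtype.val ⁻¹' U' ∩ Subtype.val ⁻¹' V') :=
        ⟨h2, hnsub hw1, hmsub hw2⟩
      rw [hUV] at this
      exact this
  · exact ⟨1, x, ⟨natToSuper_one_dvd x, super_dvd_refl x⟩,
      fun y _ h2 hyS => hne ⟨⟨y, hyS⟩, h2⟩⟩

theorem stmt3 (S : Set Supernatural) :
    (T0Space S ∧ QuasiSober S) ↔ IsClosed[pcfbTopology] S := by
  constructor
  · rintro ⟨_, hqs⟩
    exact pcfbClosed_of_quasiSober hqs
  · intro h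
    exact ⟨inferInstance, quasiSober_of_pcfbClosed h⟩
end

section
/- Give 𝕊 the localic topology. An open subset U ⊆ 𝕊 is compact if and only if there exist finitely many positive natural numbers n₁, …, n_k such that U = (n₁, …, n_k) = {s ∈ 𝕊 : n_i ∣ s for some i ∈ {1, …, k}} (the empty union giving U = ∅). -/
open Topology

lemma super_dvd_def (s t : Supernatural) : s ∣ t ↔ ∀ p, s p ≤ t p := Iff.rfl

lemma mem_open_basic {U : Set Supernatural} (hU : IsOpen U) :
    ∀ x ∈ U, ∃ n : ℕ+, natToSuper n ∣ x ∧ {s | natToSuper n ∣ s} ⊆ U := by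
  induction hU with
  | basic V hV =>
    obtain ⟨m, rfl⟩ := hV
    intro x hx
    exact ⟨m, hx, fun s hs => hs⟩
  | univ =>
    intro x _
    refine ⟨1, ?_, fun s _ => trivial⟩
    intro p
    simp [natToSuper]
  | inter V W hV hW ihV ihW =>
    intro x hx
    obtain ⟨n, hn1, hn2⟩ := ihV x hx.1
    obtain ⟨m, hm1, hm2⟩ := ihW x hx.2
    have hfac : (Nat.lcm (n : ℕ) (m : ℕ)).factorization
        = (n : ℕ).factorization ⊔ (m : ℕ).factorization :=
      Nat.factorization_lcm n.ne_zero m.ne_zero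
    have hpt : ∀ p, natToSuper (n.lcm m) p = max (natToSuper n p) (natToSuper m p) := by
      intro p
      show (((n.lcm m : ℕ+) : ℕ).factorization p : ℕ∞) = _
      rw [PNat.lcm_coe, hfac]
      simp only [Finsupp.sup_apply, natToSuper]
      exact_mod_cast rfl
    refine ⟨n.lcm m, ?_, ?_⟩
    · intro p
      rw [hpt p]
      exact max_le (hn1 p) (hm1 p)
    · intro s hs
      refine ⟨hn2 (fun p => ?_), hm2 (fun p => ?_)⟩
      · exact le_trans (le_trans (le_max_left _ _) (hpt p).ge) (hs p)
      · exact le_trans (le_trans (le_max_right _ _) (hpt p).ge) (hs p)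
  | sUnion S hS ih =>
    intro x hx
    obtain ⟨V, hVS, hxV⟩ := hx
    obtain ⟨n, hn1, hn2⟩ := ih V hVS x hxV
    exact ⟨n, hn1, fun s hs => ⟨V, hVS, hn2 hs⟩⟩

lemma basic_open (n : ℕ+) : IsOpen {s | natToSuper n ∣ s} :=
  TopologicalSpace.GenerateOpen.basic _ ⟨n, rfl⟩

lemma basic_compact (n : ℕ+) : IsCompact {s | natToSuper n ∣ s} := by
  intro f hf hle
  have hmem : natToSuper n ∈ {s | natToSuper n ∣ s} := fun p => le_refl _
  have hnh : Filter.principal {s | natToSuper n ∣ s} ≤ nhds (natToSuper n) := by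
    intro V hV
    obtain ⟨W, hWsub, hWopen, hxW⟩ := mem_nhds_iff.mp hV
    obtain ⟨m, hm1, hm2⟩ := mem_open_basic hWopen _ hxW
    exact Filter.mem_principal.mpr (fun s hs => hWsub (hm2 (super_dvd_trans hm1 hs)))
  exact ⟨natToSuper n, hmem, ClusterPt.of_le_nhds' (le_trans hle hnh) hf⟩

theorem stmt9 (U : Set Supernatural) (hU : IsOpen U) :
    IsCompact U ↔ ∃ F : Finset ℕ+, U = {s | ∃ n ∈ F, natToSuper n ∣ s} := by
  classical
  constructor
  · intro hc
    set c : ℕ+ → Set Supernatural := fun n =>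
      if {s | natToSuper n ∣ s} ⊆ U then {s | natToSuper n ∣ s} else ∅ with hc_def
    have hcopen : ∀ n, IsOpen (c n) := by
      intro n
      by_cases h : {s | natToSuper n ∣ s} ⊆ U
      · simpa [hc_def, h] using basic_open n
      · simp [hc_def, h, isOpen_empty]
    have hcov : U ⊆ ⋃ n, c n := by
      intro x hx
      obtain ⟨n, hn1, hn2⟩ := mem_open_basic hU x hx
      exact Set.mem_iUnion.mpr ⟨n, by simp [hc_def, hn2, hn1]⟩
    obtain ⟨t, ht⟩ := hc.elim_finite_subcover c hcopen hcov
    refine ⟨t.filter (fun n => {s | natToSuper n ∣ s} ⊆ U), ?_⟩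
    ext x
    constructor
    · intro hx
      obtain ⟨n, hnt, hxn⟩ := Set.mem_iUnion₂.mp (ht hx)
      by_cases h : {s | natToSuper n ∣ s} ⊆ U
      · exact ⟨n, Finset.mem_filter.mpr ⟨hnt, h⟩, by simpa [hc_def, h] using hxn⟩
      · simp [hc_def, h] at hxn
    · rintro ⟨n, hn, hxn⟩
      exact (Finset.mem_filter.mp hn).2 hxn
  · rintro ⟨F, rfl⟩
    have : {s | ∃ n ∈ F, natToSuper n ∣ s} = ⋃ n ∈ (F : Set ℕ+), {s | natToSuper n ∣ s} := by
      ext x; simp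
    rw [this]
    exact F.finite_toSet.isCompact_biUnion (fun n _ => basic_compact n)
end
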